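/- For any unit vectors u_1, …, u_m ∈ ℝ^n spanning pairwise distinct lines, if there is a single value α ∈ (0, π/2] such that the angle between every pair of distinct lines span(u_i), span(u_j) equals α, then the Gram-type matrix G with G_{ij} = ⟨u_i, u_j⟩² satisfies G_{ii} = 1 and G_{ij} = cos²α for i ≠ j, so G = (1 − cos²α) I_m + cos²α J_m where J_m is the all-ones matrix; moreover G = (tr(P_i P_j))_{i,j} where P_i = u_i u_iᵀ, and since each P_i lies in the C(n+1,2)-dimensional space of symmetric matrices, rank(G) ≤ C(n+1, 2). Since α ≤ π/2 implies cos²α < 1, G is nonsingular, giving m ≤ C(n+1,2). -/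

import Mathlib

open Matrix Real
open scoped RealInnerProductSpace

private lemma sum_sq_pairs {n : ℕ} (v : Fin n → ℝ) :
    ∑ p ∈ Finset.univ.filter (fun p : Fin n × Fin n => p.1 ≤ p.2),
      (if p.1 = p.2 then (1:ℝ) else 2) * (v p.1 * v p.2)
      = (∑ a, v a) * (∑ a, v a) := by
  classical
  have hsplit : ∀ (f : Fin n × Fin n → ℝ),
      ∑ p ∈ Finset.univ.filter (fun p : Fin n × Fin n => p.1 ≤ p.2), f p
        = (∑ p ∈ Finset.univ.filter (fun p : Fin n × Fin n => p.1 = p.2), f p)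
          + ∑ p ∈ Finset.univ.filter (fun p : Fin n × Fin n => p.1 < p.2), f p := by
    intro f
    rw [← Finset.sum_filter_add_sum_filter_not
      (Finset.univ.filter (fun p : Fin n × Fin n => p.1 ≤ p.2)) (fun p => p.1 = p.2)]
    congr 1
    · congr 1
      ext p
      simp only [Finset.mem_filter, Finset.mem_univ, true_and]
      constructor
      · exact fun h => h.2
      · exact fun h => ⟨le_of_eq h, h⟩
    · congr 1
      ext p
      simp only [Finset.mem_filter, Finset.mem_univ, true_and]
      constructor
      · exact fun h => lt_of_le_of_ne h.1 h.2
      · exact fun h => ⟨le_of_lt h, ne_of_lt h⟩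
  have hswap : ∑ p ∈ Finset.univ.filter (fun p : Fin n × Fin n => p.2 < p.1), v p.1 * v p.2
      = ∑ p ∈ Finset.univ.filter (fun p : Fin n × Fin n => p.1 < p.2), v p.1 * v p.2 := by
    refine Finset.sum_nbij' Prod.swap Prod.swap ?_ ?_ ?_ ?_ ?_ <;>
      simp [mul_comm]
  have htotal : (∑ a, v a) * (∑ a, v a) = ∑ p : Fin n × Fin n, v p.1 * v p.2 := by
    rw [Finset.sum_mul_sum]
    rw [Fintype.sum_prod_type]
  rw [htotal, ← Finset.sum_filter_add_sum_filter_not Finset.univ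
    (fun p : Fin n × Fin n => p.1 ≤ p.2) (fun p => v p.1 * v p.2)]
  have hnot : Finset.univ.filter (fun p : Fin n × Fin n => ¬ p.1 ≤ p.2)
      = Finset.univ.filter (fun p : Fin n × Fin n => p.2 < p.1) := by
    ext p; simp [not_le]
  rw [hnot, hswap, hsplit (fun p => v p.1 * v p.2), hsplit]
  have h1 : ∑ p ∈ Finset.univ.filter (fun p : Fin n × Fin n => p.1 = p.2),
      (if p.1 = p.2 then (1:ℝ) else 2) * (v p.1 * v p.2)
      = ∑ p ∈ Finset.univ.filter (fun p : Fin n × Fin n => p.1 = p.2), v p.1 * v p.2 := by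
    refine Finset.sum_congr rfl fun p hp => ?_
    simp only [Finset.mem_filter, Finset.mem_univ, true_and] at hp
    simp [hp]
  have h2 : ∑ p ∈ Finset.univ.filter (fun p : Fin n × Fin n => p.1 < p.2),
      (if p.1 = p.2 then (1:ℝ) else 2) * (v p.1 * v p.2)
      = ∑ p ∈ Finset.univ.filter (fun p : Fin n × Fin n => p.1 < p.2),
        2 * (v p.1 * v p.2) := by
    refine Finset.sum_congr rfl fun p hp => ?_
    simp only [Finset.mem_filter, Finset.mem_univ, true_and] at hp
    simp [ne_of_lt hp]
  rw [h1, h2, ← Finset.mul_sum]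
  ring

/-- for unit vectors spanning pairwise distinct equiangular lines with common
angle `α ∈ (0, π/2]`, the matrix `G` of squared inner products equals
`(1 − cos²α) I + cos²α J`, coincides with `(tr(P_i P_j))` for the projections
`P_i = u_i u_iᵀ`, has rank at most `C(n+1,2)`, is nonsingular, and hence `m ≤ C(n+1,2)`. -/
theorem stmt17 (n m : ℕ) (u : Fin m → EuclideanSpace ℝ (Fin n))
    (hunit : ∀ i, ‖u i‖ = 1)
    (hlines : ∀ i j, i ≠ j → |⟪u i, u j⟫| ≠ 1)
    (α : ℝ) (hα : α ∈ Set.Ioc 0 (π / 2))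
    (hang : ∀ i j, i ≠ j → Real.arccos |⟪u i, u j⟫| = α)
    (G : Matrix (Fin m) (Fin m) ℝ) (hG : G = fun i j => ⟪u i, u j⟫ ^ 2)
    (P : Fin m → Matrix (Fin n) (Fin n) ℝ)
    (hP : P = fun i => Matrix.of fun a b => u i a * u i b) :
    G = (1 - Real.cos α ^ 2) • (1 : Matrix (Fin m) (Fin m) ℝ) +
        Real.cos α ^ 2 • Matrix.of (fun _ _ => (1 : ℝ)) ∧
    (∀ i j, G i j = Matrix.trace (P i * P j)) ∧
    G.rank ≤ (n + 1).choose 2 ∧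
    IsUnit G ∧
    m ≤ (n + 1).choose 2 := by
  classical
  obtain ⟨hα0, hα2⟩ := hα
  have hpi := Real.pi_pos
  set c : ℝ := Real.cos α ^ 2 with hc
  have hcosnn : 0 ≤ Real.cos α :=
    Real.cos_nonneg_of_mem_Icc ⟨by linarith, hα2⟩
  have hcoslt : Real.cos α < 1 := by
    have h := Real.cos_lt_cos_of_nonneg_of_le_pi (le_refl 0) (by linarith) hα0
    simpa using h
  have hc0 : 0 ≤ c := sq_nonneg _
  have hc1 : c < 1 := pow_lt_one₀ hcosnn hcoslt (by norm_num)
  -- squared inner products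
  have hinner : ∀ i j, i ≠ j → ⟪u i, u j⟫ ^ 2 = c := by
    intro i j hij
    have hle : |⟪u i, u j⟫| ≤ 1 := by
      have h := abs_real_inner_le_norm (u i) (u j)
      simpa [hunit i, hunit j] using h
    have habs : Real.cos α = |⟪u i, u j⟫| := by
      rw [← hang i j hij, Real.cos_arccos (by linarith [abs_nonneg ⟪u i, u j⟫]) hle]
    rw [hc, habs, sq_abs]
  have hdiag : ∀ i, ⟪u i, u i⟫ = 1 := by
    intro i
    rw [real_inner_self_eq_norm_sq, hunit i, one_pow]
  -- Part 1
  have part1 : G = (1 - c) • (1 : Matrix (Fin m) (Fin m) ℝ) +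
      c • Matrix.of (fun _ _ => (1 : ℝ)) := by
    funext i j
    rw [hG]
    by_cases h : i = j
    · subst h
      simp [Matrix.add_apply, Matrix.smul_apply, Matrix.one_apply, hdiag i, hunit i]
    · show ⟪u i, u j⟫ ^ 2 = _
      rw [hinner i j h]
      simp [Matrix.add_apply, Matrix.smul_apply, Matrix.one_apply, h]
  -- inner product as a sum
  have hinneq : ∀ i j, ⟪u i, u j⟫ = ∑ a, u i a * u j a := by
    intro i j
    rw [PiLp.inner_apply]
    refine Finset.sum_congr rfl fun a _ => ?_
    simp [RCLike.inner_apply, mul_comm]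
  -- Part 2
  have part2 : ∀ i j, G i j = Matrix.trace (P i * P j) := by
    intro i j
    rw [hG, hP]
    simp only [Matrix.trace, Matrix.diag, Matrix.mul_apply, Matrix.of_apply]
    rw [hinneq, pow_two, Finset.sum_mul_sum]
    exact Finset.sum_congr rfl fun a _ => Finset.sum_congr rfl fun b _ => by ring
  -- Part 3: rank bound
  have hcard : Fintype.card {p : Fin n × Fin n // p.1 ≤ p.2} = (n + 1).choose 2 := by
    rw [← Fintype.card_congr (Sym2.sortEquiv (α := Fin n)), Sym2.card, Fintype.card_fin]
  set B : Matrix (Fin m) {p : Fin n × Fin n // p.1 ≤ p.2} ℝ :=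
    Matrix.of (fun i p =>
      (if p.1.1 = p.1.2 then (1:ℝ) else Real.sqrt 2) * (u i p.1.1 * u i p.1.2)) with hB
  have hfact : G = B * B.transpose := by
    funext i j
    rw [hG]
    show ⟪u i, u j⟫ ^ 2 = _
    rw [Matrix.mul_apply]
    have hsub := Finset.sum_subtype (p := fun p : Fin n × Fin n => p.1 ≤ p.2)
      (F := (inferInstance : Fintype {p : Fin n × Fin n // p.1 ≤ p.2}))
      (Finset.univ.filter (fun p : Fin n × Fin n => p.1 ≤ p.2))
      (by simp) (fun p => (if p.1 = p.2 then (1:ℝ) else 2) * (u i p.1 * u j p.1 * (u i p.2 * u j p.2)))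
    have hkey := sum_sq_pairs (fun a => u i a * u j a)
    rw [hsub] at hkey
    rw [hinneq, pow_two, ← hkey]
    refine Finset.sum_congr rfl fun p _ => ?_
    simp only [hB, Matrix.of_apply, Matrix.transpose_apply]
    by_cases h : p.1.1 = p.1.2
    · simp only [h, if_true]; ring
    · simp only [h, if_false]
      have h2 : Real.sqrt 2 * Real.sqrt 2 = 2 := Real.mul_self_sqrt (by norm_num)
      linear_combination (-(u i p.1.1 * u j p.1.1 * u i p.1.2 * u j p.1.2)) * h2
  have part3 : G.rank ≤ (n + 1).choose 2 := by
    rw [hfact]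
    calc (B * B.transpose).rank ≤ B.rank := Matrix.rank_mul_le_left B B.transpose
      _ ≤ Fintype.card {p : Fin n × Fin n // p.1 ≤ p.2} := Matrix.rank_le_card_width B
      _ = (n + 1).choose 2 := hcard
  -- Part 4: G is a unit
  have hposdef : G.PosDef := by
    rw [part1]
    rw [Matrix.posDef_iff_dotProduct_mulVec]
    constructor
    · show _ᴴ = _
      funext a b
      simp only [Matrix.conjTranspose_apply, Matrix.add_apply, Matrix.smul_apply,
        Matrix.one_apply, Matrix.of_apply, star_trivial, smul_eq_mul]
      by_cases h : a = b <;> simp [h, eq_comm]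
    · intro x hx
      have hone : (Matrix.of (fun _ _ => (1:ℝ)) : Matrix (Fin m) (Fin m) ℝ) *ᵥ x
          = fun _ => ∑ k, x k := by
        funext a
        simp [Matrix.mulVec, dotProduct]
      have key : star x ⬝ᵥ (((1 - c) • (1 : Matrix (Fin m) (Fin m) ℝ) +
          c • Matrix.of (fun _ _ => (1:ℝ))) *ᵥ x)
          = (1 - c) * (∑ i, x i * x i) + c * ((∑ i, x i) * (∑ i, x i)) := by
        simp only [star_trivial, Matrix.add_mulVec, Matrix.smul_mulVec,
          Matrix.one_mulVec, hone, dotProduct, Pi.add_apply, Pi.smul_apply,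
          smul_eq_mul]
        calc ∑ a, x a * ((1 - c) * x a + c * ∑ k, x k)
            = ∑ a, ((1 - c) * (x a * x a) + (c * ∑ k, x k) * x a) :=
              Finset.sum_congr rfl fun a _ => by ring
          _ = (1 - c) * (∑ i, x i * x i) + c * ((∑ i, x i) * (∑ i, x i)) := by
              rw [Finset.sum_add_distrib, ← Finset.mul_sum, ← Finset.mul_sum]
              ring
      rw [key]
      obtain ⟨k, hk⟩ := Function.ne_iff.1 hx
      have hsum : 0 < ∑ i, x i * x i :=
        Finset.sum_pos' (fun i _ => mul_self_nonneg _)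
          ⟨k, Finset.mem_univ k, mul_self_pos.2 hk⟩
      nlinarith [mul_self_nonneg (∑ i, x i)]
  have part4 : IsUnit G :=
    (Matrix.isUnit_iff_isUnit_det G).2 hposdef.det_pos.ne'.isUnit
  -- Part 5
  have part5 : m ≤ (n + 1).choose 2 := by
    have hr : G.rank = m := by
      rw [Matrix.rank_of_isUnit G part4, Fintype.card_fin]
    rw [← hr]
    exact part3
  exact ⟨part1, part2, part3, part4, part5⟩
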